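/- Let G be an amply regular graph with parameters (n, d, α, β). Then for every edge xy ∈ E, the Lin-Lu-Yau curvature satisfies κ(x,y) ≤ (2 + α)/d. -/

import Mathlib

open Filter Topology
open scoped Classical

variable {V : Type*}

/-- The L¹-Wasserstein (optimal transport) distance between two probability
measures on the vertex set of a graph, with respect to the graph distance. -/
noncomputable def wassDist (G : SimpleGraph V) (μ ν : V → ℝ) : ℝ :=
  sInf {c : ℝ | ∃ π : V → V → ℝ, (∀ u v, 0 ≤ π u v) ∧
    (∀ u, ∑ᶠ v, π u v = μ u) ∧ (∀ v, ∑ᶠ u, π u v = ν v) ∧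
    c = ∑ᶠ u, ∑ᶠ v, (G.dist u v : ℝ) * π u v}

/-- The probability measure `μ_x^p` with idleness `p` around vertex `x`. -/
noncomputable def muIdle (G : SimpleGraph V) [G.LocallyFinite] (p : ℝ) (x : V) : V → ℝ :=
  fun v => if v = x then p else if G.Adj x v then (1 - p) / (G.degree x : ℝ) else 0

/-- The `p`-Ollivier-Ricci curvature `κ_p(x,y)`. -/
noncomputable def ollivier (G : SimpleGraph V) [G.LocallyFinite] (p : ℝ) (x y : V) : ℝ :=
  1 - wassDist G (muIdle G p x) (muIdle G p y) / (G.dist x y : ℝ)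

/-- The Lin-Lu-Yau curvature `κ(x,y) = lim_{p→1} κ_p(x,y)/(1-p)`. -/
noncomputable def lly (G : SimpleGraph V) [G.LocallyFinite] (x y : V) : ℝ :=
  limUnder (𝓝[<] (1 : ℝ)) (fun p => ollivier G p x y / (1 - p))

/-- An amply regular graph with parameters `(n, d, a, b)`. -/
def IsAmplyRegular (G : SimpleGraph V) [Fintype V] [DecidableEq V] [DecidableRel G.Adj]
    (n d a b : ℕ) : Prop :=
  Fintype.card V = n ∧ G.IsRegularOfDegree d ∧
  (∀ x y : V, G.Adj x y → (G.neighborFinset x ∩ G.neighborFinset y).card = a) ∧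
  (∀ x y : V, G.dist x y = 2 → (G.neighborFinset x ∩ G.neighborFinset y).card = b)

def planCosts [Fintype V] (G : SimpleGraph V) (μ ν : V → ℝ) : Set ℝ :=
  {c : ℝ | ∃ π : V → V → ℝ, (∀ u v, 0 ≤ π u v) ∧
    (∀ u, ∑ v, π u v = μ u) ∧ (∀ v, ∑ u, π u v = ν v) ∧
    c = ∑ u, ∑ v, (G.dist u v : ℝ) * π u v}

lemma wassDist_eq_sInf_planCosts [Fintype V] (G : SimpleGraph V) (μ ν : V → ℝ) :
    wassDist G μ ν = sInf (planCosts G μ ν) := by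
  simp only [wassDist, planCosts, finsum_eq_sum_of_fintype]

lemma muIdle_nonneg [Fintype V] (G : SimpleGraph V) [DecidableEq V] [DecidableRel G.Adj]
    {p : ℝ} (h0 : 0 ≤ p) (h1 : p ≤ 1) (x v : V) : 0 ≤ muIdle G p x v := by
  unfold muIdle
  split_ifs with h h'
  · exact h0
  · exact div_nonneg (by linarith) (Nat.cast_nonneg _)
  · exact le_rfl

lemma muIdle_sum_eq_one [Fintype V] [DecidableEq V] (G : SimpleGraph V) [DecidableRel G.Adj]
    (p : ℝ) (x : V) (hd : 0 < G.degree x) : ∑ v, muIdle G p x v = 1 := by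
  have h1 : ∀ v : V, muIdle G p x v =
      (if v = x then p else 0) + (if G.Adj x v then (1 - p) / (G.degree x : ℝ) else 0) := by
    intro v
    by_cases hv : v = x
    · subst hv; simp [muIdle]
    · simp [muIdle, hv]
  simp_rw [h1, Finset.sum_add_distrib]
  rw [Finset.sum_ite_eq' Finset.univ x fun _ => p]
  rw [← Finset.sum_filter, ← SimpleGraph.neighborFinset_eq_filter, Finset.sum_const,
    SimpleGraph.card_neighborFinset_eq_degree, nsmul_eq_mul]
  have hne : (G.degree x : ℝ) ≠ 0 := Nat.cast_ne_zero.mpr hd.ne'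
  simp only [Finset.mem_univ, if_true]
  field_simp
  ring

lemma muIdle_inner [Fintype V] [DecidableEq V] (G : SimpleGraph V) [DecidableRel G.Adj]
    (p : ℝ) (x : V) (f : V → ℝ) :
    ∑ u, f u * muIdle G p x u =
      p * f x + (1 - p) / (G.degree x : ℝ) * ∑ u ∈ G.neighborFinset x, f u := by
  have h1 : ∀ u : V, f u * muIdle G p x u =
      (if u = x then p * f u else 0) +
        (if G.Adj x u then (1 - p) / (G.degree x : ℝ) * f u else 0) := by
    intro u
    by_cases hu : u = x
    · subst hu; simp [muIdle]; ring
    · by_cases ha : G.Adj x u <;> simp [muIdle, hu, ha] <;> ring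
  simp_rw [h1, Finset.sum_add_distrib]
  rw [Finset.sum_ite_eq' Finset.univ x fun u => p * f u]
  rw [← Finset.sum_filter, ← SimpleGraph.neighborFinset_eq_filter, ← Finset.mul_sum]
  simp

lemma planCosts_lb [Fintype V] [DecidableEq V] {G : SimpleGraph V} [DecidableRel G.Adj]
    (hconn : G.Connected) {d a : ℕ} (hreg : G.IsRegularOfDegree d)
    {x y : V} (hxy : G.Adj x y)
    (ha : (G.neighborFinset x ∩ G.neighborFinset y).card = a)
    {p : ℝ} (hp : p ≤ 1) {c : ℝ}
    (hc : c ∈ planCosts G (muIdle G p x) (muIdle G p y)) :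
    1 - (1 - p) * (2 + (a : ℝ)) / (d : ℝ) ≤ c := by
  obtain ⟨π, hπ0, hrow, hcol, hcost⟩ := hc
  set f : V → ℝ := fun u => (G.dist u y : ℝ) with hf
  have hyN : y ∈ G.neighborFinset x := (SimpleGraph.mem_neighborFinset G x y).mpr hxy
  have hd0 : 0 < d := by
    rw [← hreg x]
    exact (G.degree_pos_iff_exists_adj x).mpr ⟨y, hxy⟩
  have hdR : (0:ℝ) < d := by exact_mod_cast hd0
  -- Kantorovich easy direction
  have key : ∑ u, f u * muIdle G p x u - ∑ v, f v * muIdle G p y v ≤ c := by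
    have hsplit : ∑ u, ∑ v, (f u - f v) * π u v
        = ∑ u, f u * muIdle G p x u - ∑ v, f v * muIdle G p y v := by
      have h2 : ∀ u : V, ∑ v, (f u - f v) * π u v
          = f u * muIdle G p x u - ∑ v, f v * π u v := by
        intro u
        simp_rw [sub_mul, Finset.sum_sub_distrib, ← Finset.mul_sum, hrow u]
      simp_rw [h2, Finset.sum_sub_distrib]
      congr 1
      rw [Finset.sum_comm]
      exact Finset.sum_congr rfl fun v _ => by rw [← Finset.mul_sum, hcol v]
    rw [hcost, ← hsplit]
    apply Finset.sum_le_sum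
    intro u _
    apply Finset.sum_le_sum
    intro v _
    apply mul_le_mul_of_nonneg_right _ (hπ0 u v)
    have ht : G.dist u y ≤ G.dist u v + G.dist v y := hconn.dist_triangle
    have htR : (G.dist u y : ℝ) ≤ (G.dist u v : ℝ) + (G.dist v y : ℝ) := by exact_mod_cast ht
    simp only [hf]
    linarith
  -- compute the two inner products
  have hx1 : f x = 1 := by
    simp only [hf]
    rw [SimpleGraph.dist_eq_one_iff_adj.mpr hxy]
    norm_num
  have hy0 : f y = 0 := by simp [hf, SimpleGraph.dist_self]
  have hsum_y : ∑ u ∈ G.neighborFinset y, f u = (d : ℝ) := by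
    have h1 : ∀ u ∈ G.neighborFinset y, f u = 1 := by
      intro u hu
      have : G.Adj u y := ((SimpleGraph.mem_neighborFinset G y u).mp hu).symm
      simp [hf, SimpleGraph.dist_eq_one_iff_adj.mpr this]
    rw [Finset.sum_congr rfl h1, Finset.sum_const, SimpleGraph.card_neighborFinset_eq_degree,
      hreg y, nsmul_eq_mul, mul_one]
  have hsum_x : 2 * (d:ℝ) - 2 - a ≤ ∑ u ∈ G.neighborFinset x, f u := by
    set A := G.neighborFinset x ∩ G.neighborFinset y with hA
    set E := (G.neighborFinset x).erase y with hE
    have hAE : A ⊆ E := by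
      intro u hu
      obtain ⟨h1, h2⟩ := Finset.mem_inter.mp hu
      refine Finset.mem_erase.mpr ⟨?_, h1⟩
      rintro rfl
      exact G.irrefl ((SimpleGraph.mem_neighborFinset G _ _).mp h2)
    have hcardE : E.card = d - 1 := by
      rw [hE, Finset.card_erase_of_mem hyN, SimpleGraph.card_neighborFinset_eq_degree, hreg x]
    have haE : a ≤ d - 1 := by
      rw [← ha, ← hcardE]; exact Finset.card_le_card hAE
    have h1d : 1 ≤ d := hd0
    have hNsum : ∑ u ∈ G.neighborFinset x, f u = ∑ u ∈ E, f u := by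
      rw [← Finset.add_sum_erase _ f hyN, hy0, zero_add]
    have hAsum : ∑ u ∈ A, f u = (a : ℝ) := by
      have h1 : ∀ u ∈ A, f u = 1 := by
        intro u hu
        have : G.Adj u y := ((SimpleGraph.mem_neighborFinset G y u).mp
          (Finset.mem_inter.mp hu).2).symm
        simp [hf, SimpleGraph.dist_eq_one_iff_adj.mpr this]
      rw [Finset.sum_congr rfl h1, Finset.sum_const, ha, nsmul_eq_mul, mul_one]
    have hEA : ∀ u ∈ E \ A, (2:ℝ) ≤ f u := by
      intro u hu
      obtain ⟨huE, huA⟩ := Finset.mem_sdiff.mp hu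
      obtain ⟨huy, huN⟩ := Finset.mem_erase.mp huE
      have hnadj : ¬ G.Adj u y := by
        intro hadj
        exact huA (Finset.mem_inter.mpr ⟨huN,
          (SimpleGraph.mem_neighborFinset G y u).mpr hadj.symm⟩)
      have h0 : G.dist u y ≠ 0 := fun h0 => huy (hconn.dist_eq_zero_iff.mp h0)
      have h1 : G.dist u y ≠ 1 := fun h1 => hnadj (SimpleGraph.dist_eq_one_iff_adj.mp h1)
      have : 2 ≤ G.dist u y := by omega
      simp only [hf]
      exact_mod_cast this
    have hsum_EA : ((E \ A).card : ℝ) * 2 ≤ ∑ u ∈ E \ A, f u := by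
      have := Finset.card_nsmul_le_sum (E \ A) f 2 hEA
      rwa [nsmul_eq_mul] at this
    have hcardEA : ((E \ A).card : ℝ) = (d : ℝ) - 1 - a := by
      rw [Finset.card_sdiff_of_subset hAE, hcardE, ha]
      push_cast [Nat.cast_sub haE, Nat.cast_sub h1d]
      ring
    have hsplitE : ∑ u ∈ E, f u = ∑ u ∈ E \ A, f u + ∑ u ∈ A, f u :=
      (Finset.sum_sdiff hAE).symm
    rw [hNsum, hsplitE, hAsum]
    rw [hcardEA] at hsum_EA
    linarith
  have hinx := muIdle_inner G p x f
  have hiny := muIdle_inner G p y f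
  rw [hreg x] at hinx
  rw [hreg y] at hiny
  rw [hx1] at hinx
  rw [hy0, hsum_y, mul_zero, zero_add] at hiny
  have hfrac : 0 ≤ (1 - p) / (d : ℝ) := div_nonneg (by linarith) hdR.le
  have hmul : (1 - p) / (d : ℝ) * (2 * (d:ℝ) - 2 - a) ≤
      (1 - p) / (d : ℝ) * ∑ u ∈ G.neighborFinset x, f u :=
    mul_le_mul_of_nonneg_left hsum_x hfrac
  have hiny' : ∑ v, f v * muIdle G p y v = 1 - p := by
    rw [hiny]; field_simp
  have halg : p * 1 + (1 - p) / (d:ℝ) * (2 * (d:ℝ) - 2 - a) - (1 - p)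
      = 1 - (1 - p) * (2 + (a:ℝ)) / d := by
    field_simp
    ring
  rw [hinx] at key
  rw [hiny'] at key
  linarith

lemma planCosts_nonempty [Fintype V] [DecidableEq V] (G : SimpleGraph V) [DecidableRel G.Adj]
    {p : ℝ} (hp0 : 0 ≤ p) (hp1 : p ≤ 1) (x y : V)
    (hdx : 0 < G.degree x) (hdy : 0 < G.degree y) :
    (planCosts G (muIdle G p x) (muIdle G p y)).Nonempty := by
  refine ⟨∑ u, ∑ v, (G.dist u v : ℝ) * (muIdle G p x u * muIdle G p y v),
    fun u v => muIdle G p x u * muIdle G p y v, ?_, ?_, ?_, rfl⟩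
  · intro u v
    exact mul_nonneg (muIdle_nonneg G hp0 hp1 x u) (muIdle_nonneg G hp0 hp1 y v)
  · intro u
    rw [← Finset.mul_sum, muIdle_sum_eq_one G p y hdy, mul_one]
  · intro v
    rw [← Finset.sum_mul, muIdle_sum_eq_one G p x hdx, one_mul]

lemma muIdle_affine [DecidableEq V] (G : SimpleGraph V) [G.LocallyFinite] (p t : ℝ) (x u : V) :
    muIdle G (t * p + (1 - t)) x u
      = t * muIdle G p x u + (1 - t) * (if u = x then 1 else 0) := by
  unfold muIdle
  by_cases h : u = x
  · simp [h]
  · by_cases ha : G.Adj x u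
    · simp only [h, if_false, ha, if_true]
      ring
    · simp [h, ha]

lemma planCosts_comb [Fintype V] [DecidableEq V] (G : SimpleGraph V) [DecidableRel G.Adj]
    {x y : V} (hxy : G.Adj x y) {p t : ℝ} (ht0 : 0 ≤ t) (ht1 : t ≤ 1) {c : ℝ}
    (hc : c ∈ planCosts G (muIdle G p x) (muIdle G p y)) :
    t * c + (1 - t) ∈
      planCosts G (muIdle G (t * p + (1 - t)) x) (muIdle G (t * p + (1 - t)) y) := by
  obtain ⟨π, h0, hrow, hcol, hcost⟩ := hc
  refine ⟨fun u v => t * π u v + (1 - t) * (if u = x ∧ v = y then 1 else 0), ?_, ?_, ?_, ?_⟩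
  · intro u v
    have h2 : (0:ℝ) ≤ (if u = x ∧ v = y then (1:ℝ) else 0) := by positivity
    have h3 := mul_nonneg (by linarith : (0:ℝ) ≤ 1 - t) h2
    have h4 := mul_nonneg ht0 (h0 u v)
    show (0:ℝ) ≤ t * π u v + (1 - t) * (if u = x ∧ v = y then 1 else 0)
    linarith
  · intro u
    rw [Finset.sum_add_distrib, ← Finset.mul_sum, hrow u, ← Finset.mul_sum]
    have h2 : ∑ v, (if u = x ∧ v = y then (1:ℝ) else 0) = if u = x then 1 else 0 := by
      by_cases h : u = x
      · simp [h]
      · simp [h]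
    rw [h2, ← muIdle_affine]
  · intro v
    rw [Finset.sum_add_distrib, ← Finset.mul_sum, hcol v, ← Finset.mul_sum]
    have h2 : ∑ u, (if u = x ∧ v = y then (1:ℝ) else 0) = if v = y then 1 else 0 := by
      by_cases h : v = y
      · simp [h]
      · simp [h]
    rw [h2, ← muIdle_affine]
  · have h1 : ∀ u v : V, (G.dist u v : ℝ) *
        (t * π u v + (1 - t) * (if u = x ∧ v = y then 1 else 0))
        = t * ((G.dist u v : ℝ) * π u v)
          + (1 - t) * ((G.dist u v : ℝ) * (if u = x ∧ v = y then 1 else 0)) := by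
      intro u v; ring
    simp_rw [h1, Finset.sum_add_distrib, ← Finset.mul_sum]
    have h2 : ∑ u, ∑ v, (G.dist u v : ℝ) * (if u = x ∧ v = y then 1 else 0)
        = (G.dist x y : ℝ) := by
      have h3 : ∀ u : V, ∑ v, (G.dist u v : ℝ) * (if u = x ∧ v = y then 1 else 0)
          = if u = x then (G.dist u y : ℝ) else 0 := by
        intro u
        by_cases h : u = x
        · simp [h, mul_ite, mul_one, mul_zero]
        · simp [h]
      simp_rw [h3]
      simp
    rw [h2, SimpleGraph.dist_eq_one_iff_adj.mpr hxy, ← hcost]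
    norm_num

/-- For any amply regular graph with parameters `(n, d, α, β)`, the Lin-Lu-Yau
curvature of every edge is at most `(2 + α)/d`. -/
theorem stmt17 [Fintype V] [DecidableEq V] (G : SimpleGraph V) [DecidableRel G.Adj]
    (hconn : G.Connected) (n d α β : ℕ) (h : IsAmplyRegular G n d α β)
    (x y : V) (hxy : G.Adj x y) :
    lly G x y ≤ (2 + (α : ℝ)) / d := by
  obtain ⟨hn, hreg, hα, hβ⟩ := h
  have hd0 : 0 < d := by
    rw [← hreg x]
    exact (G.degree_pos_iff_exists_adj x).mpr ⟨y, hxy⟩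
  have hdR : (0:ℝ) < d := by exact_mod_cast hd0
  set W : ℝ → ℝ := fun p => sInf (planCosts G (muIdle G p x) (muIdle G p y)) with hWdef
  have hLB : ∀ p : ℝ, p ≤ 1 → ∀ c ∈ planCosts G (muIdle G p x) (muIdle G p y),
      1 - (1 - p) * (2 + (α:ℝ)) / d ≤ c :=
    fun p hp c hc => planCosts_lb hconn hreg hxy (hα x y hxy) hp hc
  have hbdd : ∀ p : ℝ, p ≤ 1 → BddBelow (planCosts G (muIdle G p x) (muIdle G p y)) :=
    fun p hp => ⟨_, fun c hc => hLB p hp c hc⟩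
  have hne : ∀ p : ℝ, 0 ≤ p → p ≤ 1 →
      (planCosts G (muIdle G p x) (muIdle G p y)).Nonempty :=
    fun p h0 h1 => planCosts_nonempty G h0 h1 x y
      (by rw [hreg x]; exact hd0) (by rw [hreg y]; exact hd0)
  have hWlb : ∀ p : ℝ, 0 ≤ p → p ≤ 1 → 1 - (1 - p) * (2 + (α:ℝ)) / d ≤ W p :=
    fun p h0 h1 => le_csInf (hne p h0 h1) (hLB p h1)
  have hWmono : ∀ p q : ℝ, 0 ≤ p → p ≤ q → q < 1 →
      W q ≤ ((1 - q) / (1 - p)) * W p + (1 - (1 - q) / (1 - p)) := by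
    intro p q h0 hpq hq1
    have hp1 : p < 1 := lt_of_le_of_lt hpq hq1
    have h1p : (0:ℝ) < 1 - p := by linarith
    set t : ℝ := (1 - q) / (1 - p) with htdef
    have ht0 : 0 ≤ t := div_nonneg (by linarith) h1p.le
    have ht1 : t ≤ 1 := by
      rw [htdef, div_le_one h1p]; linarith
    have hq : t * p + (1 - t) = q := by
      rw [htdef]; field_simp; ring
    have step : ∀ c ∈ planCosts G (muIdle G p x) (muIdle G p y),
        W q ≤ t * c + (1 - t) := by
      intro c hc
      have hmem := planCosts_comb G hxy ht0 ht1 hc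
      rw [hq] at hmem
      exact csInf_le (hbdd q hq1.le) hmem
    rcases eq_or_lt_of_le ht0 with ht | htpos
    · obtain ⟨c, hc⟩ := hne p h0 hp1.le
      have := step c hc
      rw [← ht] at this ⊢
      simpa using this
    · have hWp : (W q - (1 - t)) / t ≤ W p := by
        apply le_csInf (hne p h0 hp1.le)
        intro c hc
        rw [div_le_iff₀ htpos]
        have := step c hc
        linarith [mul_comm c t]
      have := (div_le_iff₀ htpos).mp hWp
      linarith [mul_comm (W p) t]
  set g : ℝ → ℝ := fun p => (1 - W p) / (1 - p) with hgdef
  have hgmono : ∀ p q : ℝ, 0 ≤ p → p ≤ q → q < 1 → g p ≤ g q := by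
    intro p q h0 hpq hq1
    have hp1 : p < 1 := lt_of_le_of_lt hpq hq1
    have h1p : (0:ℝ) < 1 - p := by linarith
    have h1q : (0:ℝ) < 1 - q := by linarith
    have h := hWmono p q h0 hpq hq1
    have expand : ((1 - q) / (1 - p)) * W p + (1 - (1 - q) / (1 - p))
        = 1 - ((1 - q) * (1 - W p)) / (1 - p) := by
      field_simp; ring
    rw [expand] at h
    have h2 : ((1 - q) * (1 - W p)) / (1 - p) ≤ 1 - W q := by linarith
    show (1 - W p) / (1 - p) ≤ (1 - W q) / (1 - q)
    rw [div_le_div_iff₀ h1p h1q]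
    calc (1 - W p) * (1 - q) = ((1 - q) * (1 - W p)) / (1 - p) * (1 - p) := by
          field_simp
      _ ≤ (1 - W q) * (1 - p) := mul_le_mul_of_nonneg_right h2 h1p.le
  have hgub : ∀ p : ℝ, 0 ≤ p → p < 1 → g p ≤ (2 + (α:ℝ)) / d := by
    intro p h0 h1
    have h1p : (0:ℝ) < 1 - p := by linarith
    have hw := hWlb p h0 h1.le
    show (1 - W p) / (1 - p) ≤ (2 + (α:ℝ)) / d
    rw [div_le_iff₀ h1p]
    have hr : (1 - p) * (2 + (α:ℝ)) / d = (2 + (α:ℝ)) / d * (1 - p) := by ring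
    linarith [hr ▸ hw]
  set g' : ℝ → ℝ := fun p => g (max p 0) with hg'def
  have hmono' : MonotoneOn g' (Set.Iio (1:ℝ)) := by
    intro p _ q hq hpq
    exact hgmono (max p 0) (max q 0) (le_max_right p 0) (max_le_max hpq le_rfl)
      (max_lt hq one_pos)
  have hbdd' : BddAbove (g' '' Set.Iio 1) := by
    refine ⟨(2 + (α:ℝ)) / d, ?_⟩
    rintro _ ⟨p, hp, rfl⟩
    exact hgub (max p 0) (le_max_right p 0) (max_lt hp one_pos)
  have htend := hmono'.tendsto_nhdsLT hbdd'
  have heq : g' =ᶠ[𝓝[<] (1:ℝ)] (fun p => ollivier G p x y / (1 - p)) := by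
    filter_upwards [Ioo_mem_nhdsLT_of_mem (by norm_num : (1:ℝ) ∈ Set.Ioc 0 1)] with p hp
    have hmax : max p 0 = p := max_eq_left hp.1.le
    have hdist1 : (G.dist x y : ℝ) = 1 := by
      rw [SimpleGraph.dist_eq_one_iff_adj.mpr hxy]; norm_num
    show g (max p 0) = ollivier G p x y / (1 - p)
    rw [hmax]
    show (1 - W p) / (1 - p) = ollivier G p x y / (1 - p)
    congr 1
    rw [ollivier, wassDist_eq_sInf_planCosts, hdist1, div_one]
  have htend2 : Tendsto (fun p => ollivier G p x y / (1 - p)) (𝓝[<] (1:ℝ))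
      (𝓝 (sSup (g' '' Set.Iio 1))) := htend.congr' heq
  unfold lly
  rw [htend2.limUnder_eq]
  apply csSup_le
  · exact ⟨g' 0, ⟨0, by norm_num, rfl⟩⟩
  · rintro _ ⟨p, hp, rfl⟩
    exact hgub (max p 0) (le_max_right p 0) (max_lt hp one_pos)
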